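/- For the mean-field two-group Lanchester dynamics Ṙ₁ = -κ_B·k₁·B·(n/L), Ṙ₂ = -κ_B·k₂·B·(n/L), Ḃ = -κ_R·(L₁/n)·(R₁/k₁) - κ_R·(L₂/n)·(R₂/k₂) with L₁ = n₁k₁, L₂ = n₂k₂, L = L₁+L₂, the quantity -κ_R·(L/n²)·((n₁/k₁)·R₁² + (n₂/k₂)·R₂²) + κ_B·B² is constant in time. -/

import Mathlib

theorem meanfield_two_group_invariant
    (κB κR n n₁ n₂ k₁ k₂ : ℝ)
    (hκB : 0 < κB) (hκR : 0 < κR) (hn : 0 < n)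
    (hn₁ : 0 < n₁) (hn₂ : 0 < n₂) (hk₁ : 0 < k₁) (hk₂ : 0 < k₂)
    (hsum : n₁ + n₂ = n)
    (R₁ R₂ B : ℝ → ℝ)
    (hR₁ : ∀ t, HasDerivAt R₁ (-(κB * k₁ * B t * (n / (n₁ * k₁ + n₂ * k₂)))) t)
    (hR₂ : ∀ t, HasDerivAt R₂ (-(κB * k₂ * B t * (n / (n₁ * k₁ + n₂ * k₂)))) t)
    (hB : ∀ t, HasDerivAt B
      (-(κR * ((n₁ * k₁) / n) * (R₁ t / k₁)) - κR * ((n₂ * k₂) / n) * (R₂ t / k₂)) t) :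
    ∀ t,
      -(κR * ((n₁ * k₁ + n₂ * k₂) / n^2) * ((n₁ / k₁) * (R₁ t)^2 + (n₂ / k₂) * (R₂ t)^2))
        + κB * (B t)^2
      = -(κR * ((n₁ * k₁ + n₂ * k₂) / n^2) * ((n₁ / k₁) * (R₁ 0)^2 + (n₂ / k₂) * (R₂ 0)^2))
        + κB * (B 0)^2 := by
  have hL : n₁ * k₁ + n₂ * k₂ ≠ 0 := by positivity
  have hn' : n ≠ 0 := ne_of_gt hn
  have hk₁' : k₁ ≠ 0 := ne_of_gt hk₁
  have hk₂' : k₂ ≠ 0 := ne_of_gt hk₂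
  set F : ℝ → ℝ := fun t =>
    -(κR * ((n₁ * k₁ + n₂ * k₂) / n^2) * ((n₁ / k₁) * (R₁ t)^2 + (n₂ / k₂) * (R₂ t)^2))
      + κB * (B t)^2 with hF
  have key : ∀ t, HasDerivAt F 0 t := by
    intro t
    have h := (((((hR₁ t).pow 2).const_mul (n₁ / k₁)).add
        (((hR₂ t).pow 2).const_mul (n₂ / k₂))).const_mul
        (κR * ((n₁ * k₁ + n₂ * k₂) / n^2))).neg.add (((hB t).pow 2).const_mul κB)
    refine h.congr_deriv ?_
    field_simp
    ring
  have hconst : ∀ t, F t = F 0 := by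
    intro t
    have : ∀ s, deriv F s = 0 := fun s => (key s).deriv
    exact is_const_of_deriv_eq_zero (fun s => (key s).differentiableAt) this t 0
  intro t
  exact hconst t
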